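/- RIP near-orthogonality of disjoint supports: Suppose A satisfies the s-RIP with constant δ_s < 1. Let I, J ⊆ [n] be disjoint with |I ∪ J| ≤ s, and let x ∈ R^n. Then ‖A_Jᵀ A_I x_I‖_2 ≤ δ_s ‖x_I‖_2. -/
import Mathlib


open Finset Matrix

noncomputable def l1 {k : ℕ} (x : Fin k → ℝ) : ℝ := ∑ i, |x i|

noncomputable def l2 {k : ℕ} (x : Fin k → ℝ) : ℝ := Real.sqrt (∑ i, (x i)^2)

def restr {k : ℕ} (I : Finset (Fin k)) (x : Fin k → ℝ) : Fin k → ℝ :=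
  fun i => if i ∈ I then x i else 0


def RIP {m n : ℕ} (A : Matrix (Fin m) (Fin n) ℝ) (s : ℕ) (δ : ℝ) : Prop :=
  ∀ (x : Fin n → ℝ) (J : Finset (Fin n)), J.card ≤ s →
    (1 - δ) * (l2 (restr J x))^2 ≤ (l2 (A.mulVec (restr J x)))^2 ∧
    (l2 (A.mulVec (restr J x)))^2 ≤ (1 + δ) * (l2 (restr J x))^2

lemma l2_sq {k : ℕ} (v : Fin k → ℝ) : (l2 v)^2 = ∑ i, (v i)^2 :=
  Real.sq_sqrt (Finset.sum_nonneg fun i _ => sq_nonneg _)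

lemma l2_nonneg {k : ℕ} (v : Fin k → ℝ) : 0 ≤ l2 v := Real.sqrt_nonneg _

lemma l2_eq_zero {k : ℕ} {v : Fin k → ℝ} (h : l2 v = 0) : v = 0 := by
  have h2 : ∑ i, (v i)^2 = 0 := by
    have := l2_sq v; rw [h] at this; simpa using this.symm
  funext i
  have := (Finset.sum_eq_zero_iff_of_nonneg (fun i _ => sq_nonneg (v i))).mp h2 i (by simp)
  exact pow_eq_zero_iff (n := 2) (by norm_num) |>.mp this

lemma l2_smul {k : ℕ} (c : ℝ) (hc : 0 ≤ c) (v : Fin k → ℝ) :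
    l2 (fun i => c * v i) = c * l2 v := by
  unfold l2
  have : ∑ i, (c * v i)^2 = c^2 * ∑ i, (v i)^2 := by
    rw [Finset.mul_sum]; exact Finset.sum_congr rfl fun i _ => by ring
  rw [this, Real.sqrt_mul (sq_nonneg c), Real.sqrt_sq hc]

lemma rip_inner {m n : ℕ} {A : Matrix (Fin m) (Fin n) ℝ} {s : ℕ} {δ : ℝ}
    (hRIP : RIP A s δ) {I J : Finset (Fin n)} (hdisj : Disjoint I J)
    (hcard : (I ∪ J).card ≤ s) {u v : Fin n → ℝ}
    (hu : ∀ i ∉ I, u i = 0) (hv : ∀ i ∉ J, v i = 0) :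
    (A.mulVec u) ⬝ᵥ (A.mulVec v) ≤ δ/2 * ((l2 u)^2 + (l2 v)^2) := by
  have hK : ∀ w : Fin n → ℝ, (∀ i ∉ I ∪ J, w i = 0) → restr (I ∪ J) w = w := by
    intro w hw; funext i; by_cases hi : i ∈ I ∪ J <;> simp [restr, hi, hw i]
  have hsup : restr (I ∪ J) (u + v) = u + v := by
    apply hK; intro i hi; simp only [Finset.mem_union, not_or] at hi
    simp [Pi.add_apply, hu i hi.1, hv i hi.2]
  have hsub : restr (I ∪ J) (u - v) = u - v := by
    apply hK; intro i hi; simp only [Finset.mem_union, not_or] at hi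
    simp [Pi.sub_apply, hu i hi.1, hv i hi.2]
  have h1 := (hRIP (u + v) (I ∪ J) hcard).2
  have h2 := (hRIP (u - v) (I ∪ J) hcard).1
  rw [hsup] at h1
  rw [hsub] at h2
  have hcross : ∀ i, u i * v i = 0 := by
    intro i
    by_cases hi : i ∈ I
    · have : i ∉ J := fun hj => (Finset.disjoint_left.mp hdisj hi) hj
      rw [hv i this, mul_zero]
    · rw [hu i hi, zero_mul]
  have eadd : (l2 (u + v))^2 = (l2 u)^2 + (l2 v)^2 := by
    rw [l2_sq, l2_sq, l2_sq, ← Finset.sum_add_distrib]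
    exact Finset.sum_congr rfl fun i _ => by
      have := hcross i; simp only [Pi.add_apply]; linear_combination (2:ℝ) * this
  have esub : (l2 (u - v))^2 = (l2 u)^2 + (l2 v)^2 := by
    rw [l2_sq, l2_sq, l2_sq, ← Finset.sum_add_distrib]
    exact Finset.sum_congr rfl fun i _ => by
      have := hcross i; simp only [Pi.sub_apply]; linear_combination (-2:ℝ) * this
  set a := A.mulVec u with ha
  set b := A.mulVec v with hb
  have hpar : (l2 (A.mulVec (u + v)))^2 - (l2 (A.mulVec (u - v)))^2 = 4 * (a ⬝ᵥ b) := by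
    rw [Matrix.mulVec_add, Matrix.mulVec_sub, l2_sq, l2_sq]
    simp only [dotProduct, Pi.add_apply, Pi.sub_apply]
    rw [← Finset.sum_sub_distrib, Finset.mul_sum]
    exact Finset.sum_congr rfl fun i _ => by ring
  rw [eadd] at h1
  rw [esub] at h2
  linarith [hpar]

lemma rip_inner' {m n : ℕ} {A : Matrix (Fin m) (Fin n) ℝ} {s : ℕ} {δ : ℝ}
    (hRIP : RIP A s δ) {I J : Finset (Fin n)} (hdisj : Disjoint I J)
    (hcard : (I ∪ J).card ≤ s) {u v : Fin n → ℝ}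
    (hu : ∀ i ∉ I, u i = 0) (hv : ∀ i ∉ J, v i = 0) :
    (A.mulVec u) ⬝ᵥ (A.mulVec v) ≤ δ * l2 u * l2 v := by
  set a := l2 u with haa
  set b := l2 v with hbb
  have ha0 : 0 ≤ a := l2_nonneg u
  have hb0 : 0 ≤ b := l2_nonneg v
  rcases eq_or_lt_of_le ha0 with ha | ha
  · have : u = 0 := l2_eq_zero ha.symm
    rw [this]
    simp [Matrix.mulVec_zero, ← ha]
  rcases eq_or_lt_of_le hb0 with hb | hb
  · have : v = 0 := l2_eq_zero hb.symm
    rw [this]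
    simp [Matrix.mulVec_zero, ← hb]
  have key := rip_inner hRIP hdisj hcard
    (u := fun i => b * u i) (v := fun i => a * v i)
    (fun i hi => by show b * u i = 0; rw [hu i hi, mul_zero])
    (fun i hi => by show a * v i = 0; rw [hv i hi, mul_zero])
  have e1 : A.mulVec (fun i => b * u i) = b • A.mulVec u := by
    have : (fun i => b * u i) = b • u := by funext i; simp
    rw [this, Matrix.mulVec_smul]
  have e2 : A.mulVec (fun i => a * v i) = a • A.mulVec v := by
    have : (fun i => a * v i) = a • v := by funext i; simp
    rw [this, Matrix.mulVec_smul]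
  rw [e1, e2, smul_dotProduct, dotProduct_smul,
    l2_smul b hb0 u, l2_smul a ha0 v, ← haa, ← hbb] at key
  simp only [smul_eq_mul] at key
  nlinarith [mul_pos ha hb]

theorem stmt10 {m n : ℕ} (A : Matrix (Fin m) (Fin n) ℝ) (s : ℕ) (δ : ℝ)
    (hδ : δ < 1) (hRIP : RIP A s δ) (x : Fin n → ℝ) (I J : Finset (Fin n))
    (hdisj : Disjoint I J) (hcard : (I ∪ J).card ≤ s) :
    l2 (restr J (Aᵀ.mulVec (A.mulVec (restr I x)))) ≤ δ * l2 (restr I x) := by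
  set u := restr I x with hu_def
  set y := Aᵀ.mulVec (A.mulVec u) with hy_def
  set w := restr J y with hw_def
  have hu : ∀ i ∉ I, u i = 0 := fun i hi => by simp [hu_def, restr, hi]
  have hw : ∀ i ∉ J, w i = 0 := fun i hi => by simp [hw_def, restr, hi]
  have key := rip_inner' hRIP hdisj hcard hu hw
  have hwsq : (l2 w)^2 = (A.mulVec u) ⬝ᵥ (A.mulVec w) := by
    rw [l2_sq]
    have e1 : ∑ i, (w i)^2 = y ⬝ᵥ w := by
      simp only [dotProduct]
      refine Finset.sum_congr rfl fun i _ => ?_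
      by_cases hi : i ∈ J <;> simp [hw_def, restr, hi] <;> ring
    rw [e1, hy_def, Matrix.mulVec_transpose, ← Matrix.dotProduct_mulVec]
  rw [← hwsq] at key
  rcases eq_or_lt_of_le (l2_nonneg w) with hw0 | hw0
  · rw [← hw0]
    rcases eq_or_lt_of_le (l2_nonneg u) with hu0 | hu0
    · rw [← hu0, mul_zero]
    · have hI : I.card ≤ s :=
        le_trans (Finset.card_le_card Finset.subset_union_left) hcard
      have h1 := (hRIP x I hI).1
      have h2 := (hRIP x I hI).2
      rw [← hu_def] at h1 h2
      have hδ0 : 0 ≤ δ := by nlinarith [pow_pos hu0 2]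
      exact mul_nonneg hδ0 (l2_nonneg u)
  · nlinarith [key]
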